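/- arXiv:1812.07780 — 2 statements merged into one kernel-verified Lean document; each statement's English description precedes it below -/
import Mathlib

section
/- Let I₀, I₁ be complex structures on a finite-dimensional real inner product space. Then every eigenvalue λ ∈ (0,1) of T₀*T₀, where T₀ = (I₀+I₁)/2, has real multiplicity divisible by 4, and the kernel of T₀*T₀ has even real dimension. -/
open Module

lemma finrank_dvd_of_algHom' (K : Type) [DivisionRing K] [Algebra ℝ K]
    {V : Type*} [AddCommGroup V] [Module ℝ V]
    (φ : K →ₐ[ℝ] Module.End ℝ V) : finrank ℝ K ∣ finrank ℝ V := by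
  letI : Module K V := Module.compHom V φ.toRingHom
  haveI : IsScalarTower ℝ K V := by
    constructor
    intro r k v
    show φ (r • k) v = r • φ k v
    rw [map_smul]
    rfl
  exact ⟨finrank K V, (Module.finrank_mul_finrank ℝ K V).symm⟩

lemma even_finrank_of_cpxStr' {V : Type*} [AddCommGroup V] [Module ℝ V]
    (J : Module.End ℝ V) (hJ : J * J = -1) : Even (finrank ℝ V) := by
  have h := finrank_dvd_of_algHom' ℂ (Complex.liftAux J hJ)
  rw [Complex.finrank_real_complex] at h
  exact even_iff_two_dvd.2 h

lemma four_dvd_finrank' {V : Type*} [AddCommGroup V] [Module ℝ V]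
    (A B : Module.End ℝ V) (c : ℝ) (hc : c ^ 2 < 1)
    (hA : A * A = -1) (hB : B * B = -1)
    (hAB : A * B + B * A = (2 * c) • (1 : Module.End ℝ V)) :
    4 ∣ finrank ℝ V := by
  set r : ℝ := Real.sqrt (1 - c ^ 2) with hrdef
  have hr : r ^ 2 = 1 - c ^ 2 := Real.sq_sqrt (by linarith)
  have hr0 : r ≠ 0 := by
    intro h
    rw [h] at hr
    simp at hr
    nlinarith
  have hBA : B * A = (2 * c) • (1 : Module.End ℝ V) - A * B := by
    rw [← hAB]; abel
  set J : Module.End ℝ V := r⁻¹ • (B + c • A) with hJdef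
  have hsum : (B + c • A) * (B + c • A) = (c ^ 2 - 1) • (1 : Module.End ℝ V) := by
    rw [add_mul, mul_add, mul_add, hB, mul_smul_comm, hBA, smul_mul_assoc, smul_mul_assoc,
      mul_smul_comm, hA]
    module
  have hJJ : J * J = -1 := by
    rw [hJdef, smul_mul_assoc, mul_smul_comm, hsum, smul_smul, smul_smul]
    have h1 : r⁻¹ * r⁻¹ * (c ^ 2 - 1) = -1 := by
      field_simp
      nlinarith
    rw [h1]
    module
  have hAJ : A * J = -(J * A) := by
    rw [hJdef, mul_smul_comm, smul_mul_assoc, mul_add, add_mul, mul_smul_comm, smul_mul_assoc,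
      hA, hBA]
    module
  let basis : QuaternionAlgebra.Basis (Module.End ℝ V) (-1 : ℝ) 0 (-1) :=
    { i := A, j := J, k := A * J
      i_mul_i := by rw [hA]; module
      j_mul_j := by rw [hJJ]; module
      i_mul_j := rfl
      j_mul_i := by rw [hAJ]; module }
  have h := finrank_dvd_of_algHom' (Quaternion ℝ)
    (basis.liftHom : Quaternion ℝ →ₐ[ℝ] Module.End ℝ V)
  rwa [Quaternion.finrank_eq_four] at h

/-- For complex structures `I₀, I₁` on a finite-dimensional real inner
product space and `T₀ = (I₀+I₁)/2`, every eigenvalue `μ ∈ (0,1)` of `T₀*T₀` has real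
multiplicity divisible by `4`, and the kernel of `T₀*T₀` has even real dimension. -/
theorem eigenvalue_multiplicities_of_TstarT
    {H : Type*} [NormedAddCommGroup H] [InnerProductSpace ℝ H] [FiniteDimensional ℝ H]
    (I₀ I₁ : H →ₗ[ℝ] H)
    (h₀a : LinearMap.adjoint I₀ = -I₀) (h₀sq : I₀ * I₀ = -1)
    (h₁a : LinearMap.adjoint I₁ = -I₁) (h₁sq : I₁ * I₁ = -1) :
    let T₀ := (2⁻¹ : ℝ) • (I₀ + I₁)
    (∀ μ ∈ Set.Ioo (0 : ℝ) 1,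
      4 ∣ finrank ℝ (Module.End.eigenspace (LinearMap.adjoint T₀ * T₀) μ)) ∧
    Even (finrank ℝ (LinearMap.ker (LinearMap.adjoint T₀ * T₀))) := by
  intro T₀
  have hadj : LinearMap.adjoint T₀ = -T₀ := by
    show LinearMap.adjoint ((2⁻¹ : ℝ) • (I₀ + I₁)) = -((2⁻¹ : ℝ) • (I₀ + I₁))
    rw [← LinearMap.star_eq_adjoint, star_smul, star_trivial, star_add,
      LinearMap.star_eq_adjoint, LinearMap.star_eq_adjoint, h₀a, h₁a]
    module
  set S := LinearMap.adjoint T₀ * T₀ with hSdef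
  have hS : S = (2⁻¹ : ℝ) • 1 - (4⁻¹ : ℝ) • (I₀ * I₁ + I₁ * I₀) := by
    rw [hSdef, hadj]
    show -((2⁻¹ : ℝ) • (I₀ + I₁)) * ((2⁻¹ : ℝ) • (I₀ + I₁)) = _
    rw [neg_mul, smul_mul_assoc, mul_smul_comm, add_mul, mul_add, mul_add, h₀sq, h₁sq]
    module
  have hcomm₀ : (I₀ * I₁ + I₁ * I₀) * I₀ = I₀ * (I₀ * I₁ + I₁ * I₀) := by
    rw [add_mul, mul_add, mul_assoc I₀ I₁ I₀, mul_assoc I₁ I₀ I₀, h₀sq,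
      ← mul_assoc I₀ I₀ I₁, h₀sq]
    noncomm_ring
  have hcomm₁ : (I₀ * I₁ + I₁ * I₀) * I₁ = I₁ * (I₀ * I₁ + I₁ * I₀) := by
    rw [add_mul, mul_add, mul_assoc I₀ I₁ I₁, mul_assoc I₁ I₀ I₁, h₁sq,
      ← mul_assoc I₁ I₁ I₀, h₁sq]
    noncomm_ring
  have hSI₀ : S * I₀ = I₀ * S := by
    rw [hS, sub_mul, mul_sub, smul_mul_assoc, smul_mul_assoc, mul_smul_comm, mul_smul_comm,
      one_mul, mul_one, hcomm₀]
  have hSI₁ : S * I₁ = I₁ * S := by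
    rw [hS, sub_mul, mul_sub, smul_mul_assoc, smul_mul_assoc, mul_smul_comm, mul_smul_comm,
      one_mul, mul_one, hcomm₁]
  have hP : I₀ * I₁ + I₁ * I₀ = (2 : ℝ) • 1 - (4 : ℝ) • S := by
    rw [hS]; module
  constructor
  · intro μ hμ
    have hE₀ : ∀ x ∈ Module.End.eigenspace S μ, I₀ x ∈ Module.End.eigenspace S μ := by
      intro x hx
      rw [Module.End.mem_eigenspace_iff] at hx ⊢
      have h := LinearMap.congr_fun hSI₀ x
      simp only [Module.End.mul_apply] at h
      rw [h, hx, map_smul]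
    have hE₁ : ∀ x ∈ Module.End.eigenspace S μ, I₁ x ∈ Module.End.eigenspace S μ := by
      intro x hx
      rw [Module.End.mem_eigenspace_iff] at hx ⊢
      have h := LinearMap.congr_fun hSI₁ x
      simp only [Module.End.mul_apply] at h
      rw [h, hx, map_smul]
    set A := I₀.restrict hE₀ with hAdef
    set B := I₁.restrict hE₁ with hBdef
    have hA : A * A = -1 := by
      refine LinearMap.ext fun x => Subtype.ext ?_
      have h := LinearMap.congr_fun h₀sq (x : H)
      simp only [Module.End.mul_apply, LinearMap.neg_apply, Module.End.one_apply] at h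
      simp [hAdef, Module.End.mul_apply, LinearMap.restrict_coe_apply, h]
    have hB : B * B = -1 := by
      refine LinearMap.ext fun x => Subtype.ext ?_
      have h := LinearMap.congr_fun h₁sq (x : H)
      simp only [Module.End.mul_apply, LinearMap.neg_apply, Module.End.one_apply] at h
      simp [hBdef, Module.End.mul_apply, LinearMap.restrict_coe_apply, h]
    have hAB : A * B + B * A = (2 * (1 - 2 * μ)) • (1 : Module.End ℝ (Module.End.eigenspace S μ)) := by
      refine LinearMap.ext fun x => Subtype.ext ?_
      have h := LinearMap.congr_fun hP (x : H)
      have hx : S (x : H) = μ • (x : H) := Module.End.mem_eigenspace_iff.mp x.2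
      simp only [Module.End.mul_apply, LinearMap.add_apply, LinearMap.smul_apply,
        LinearMap.sub_apply, Module.End.one_apply, hx] at h
      show I₀ (I₁ (x : H)) + I₁ (I₀ (x : H)) = (2 * (1 - 2 * μ)) • (x : H)
      rw [h, smul_smul]
      module
    have hc : (1 - 2 * μ) ^ 2 < 1 := by
      obtain ⟨h1, h2⟩ := hμ
      nlinarith
    exact four_dvd_finrank' A B (1 - 2 * μ) hc hA hB hAB
  · have hE : ∀ x ∈ LinearMap.ker S, I₀ x ∈ LinearMap.ker S := by
      intro x hx
      rw [LinearMap.mem_ker] at hx ⊢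
      have h := LinearMap.congr_fun hSI₀ x
      simp only [Module.End.mul_apply] at h
      rw [h, hx, map_zero]
    set J := I₀.restrict hE with hJdef
    have hJ : J * J = -1 := by
      refine LinearMap.ext fun x => Subtype.ext ?_
      have h := LinearMap.congr_fun h₀sq (x : H)
      simp only [Module.End.mul_apply, LinearMap.neg_apply, Module.End.one_apply] at h
      simp [hJdef, Module.End.mul_apply, LinearMap.restrict_coe_apply, h]
    exact even_finrank_of_cpxStr' J hJ
end

section
/- Let I₀, I₁ be complex structures on a real (finite-dimensional or Hilbert) space with (I₀+I₁) having finite-dimensional kernel. Then dim Ker(I₀+I₁) is even, and (1/2)·dim Ker(I₀+I₁) mod 2 equals dim Ker(I₀−I₁ + 2i) mod 2, where the latter kernel is taken in the complexification. -/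
open Module TensorProduct

/-- For complex structures `I₀, I₁` (here on a finite-dimensional real
inner product space, so that `Ker(I₀+I₁)` is finite dimensional), `dim Ker(I₀+I₁)` is
even and `(1/2)·dim Ker(I₀+I₁) mod 2` equals `dim Ker(I₀−I₁+2i) mod 2`, the latter
kernel being taken in the complexification `ℂ ⊗ℝ H`. -/
theorem Z2_index_two_formulas
    {H : Type*} [NormedAddCommGroup H] [InnerProductSpace ℝ H] [FiniteDimensional ℝ H]
    (I₀ I₁ : H →ₗ[ℝ] H)
    (h₀a : LinearMap.adjoint I₀ = -I₀) (h₀sq : I₀ * I₀ = -1)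
    (h₁a : LinearMap.adjoint I₁ = -I₁) (h₁sq : I₁ * I₁ = -1) :
    Even (finrank ℝ (LinearMap.ker (I₀ + I₁))) ∧
    (finrank ℝ (LinearMap.ker (I₀ + I₁)) / 2) % 2 =
      finrank ℂ (LinearMap.ker ((I₀ - I₁).baseChange ℂ +
        (2 * Complex.I) • (LinearMap.id : ℂ ⊗[ℝ] H →ₗ[ℂ] ℂ ⊗[ℝ] H))) % 2 := by
  set A := I₀ + I₁ with hA
  set B := I₀ - I₁ with hB
  set T := B.baseChange ℂ + (2 * Complex.I) • (LinearMap.id : ℂ ⊗[ℝ] H →ₗ[ℂ] ℂ ⊗[ℝ] H) with hT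
  -- adjoint of A
  have hAadj : LinearMap.adjoint A = -A := by
    rw [hA, map_add, h₀a, h₁a]; abel
  -- A² x = 0 → A x = 0
  have kerAA : ∀ x : H, A (A x) = 0 → A x = 0 := by
    intro x hx
    have h1 : (inner ℝ (A x) (A x) : ℝ) = 0 := by
      rw [← LinearMap.adjoint_inner_right, hAadj]
      simp [hx]
    simpa using inner_self_eq_zero.mp h1
  -- algebra
  have hsq : A * A + B * B = 2 * (I₀ * I₀) + 2 * (I₁ * I₁) := by
    rw [hA, hB]; noncomm_ring
  have hsq' : A * A + B * B = -4 := by rw [hsq, h₀sq, h₁sq]; norm_num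
  have hAAx : ∀ x : H, A (A x) = -((4:ℝ) • x) - B (B x) := by
    intro x
    have := LinearMap.ext_iff.mp hsq' x
    simp only [LinearMap.add_apply, Module.End.mul_apply] at this
    have h4 : ((-4 : H →ₗ[ℝ] H)) x = -((4:ℝ) • x) := by
      show ((-4 : Module.End ℝ H)) x = -((4:ℝ) • x)
      simp
      module
    rw [h4] at this
    rw [eq_sub_iff_add_eq]
    exact this
  have hcomm : A * I₀ = I₁ * A := by
    have h1 : A * I₀ = I₀ * I₀ + I₁ * I₀ := by rw [hA]; noncomm_ring
    have h2 : I₁ * A = I₁ * I₀ + I₁ * I₁ := by rw [hA]; noncomm_ring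
    rw [h1, h2, h₀sq, h₁sq]; abel
  -- I₀ preserves ker A
  have hI₀ker : ∀ x, A x = 0 → A (I₀ x) = 0 := by
    intro x hx
    have := LinearMap.ext_iff.mp hcomm x
    simp only [Module.End.mul_apply] at this
    rw [this, hx, map_zero]
  -- B = 2 I₀ on ker A
  have hBker : ∀ x, A x = 0 → B x = (2:ℝ) • I₀ x := by
    intro x hx
    have hx' : I₁ x = -(I₀ x) := by
      have : I₀ x + I₁ x = 0 := by simpa [hA, LinearMap.add_apply] using hx
      linear_combination (norm := module) this
    rw [hB]
    simp only [LinearMap.sub_apply, hx']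
    module
  -- real/imaginary component maps
  set r : ℂ ⊗[ℝ] H →ₗ[ℝ] H :=
    (TensorProduct.lid ℝ H).toLinearMap ∘ₗ LinearMap.rTensor H Complex.reLm with hr
  set r' : ℂ ⊗[ℝ] H →ₗ[ℝ] H :=
    (TensorProduct.lid ℝ H).toLinearMap ∘ₗ LinearMap.rTensor H Complex.imLm with hr'
  have hrt : ∀ (c : ℂ) (x : H), r (c ⊗ₜ[ℝ] x) = c.re • x := by
    intro c x; simp [hr]
  have hrt' : ∀ (c : ℂ) (x : H), r' (c ⊗ₜ[ℝ] x) = c.im • x := by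
    intro c x; simp [hr']
  -- reconstruction of elements
  have hrec : ∀ v : ℂ ⊗[ℝ] H, (1:ℂ) ⊗ₜ[ℝ] r v + Complex.I ⊗ₜ[ℝ] r' v = v := by
    have : (TensorProduct.mk ℝ ℂ H 1) ∘ₗ r + (TensorProduct.mk ℝ ℂ H Complex.I) ∘ₗ r'
        = LinearMap.id := by
      apply TensorProduct.ext'
      intro c x
      simp only [LinearMap.add_apply, LinearMap.comp_apply, hrt, hrt', mk_apply,
        LinearMap.id_apply, tmul_smul]
      rw [smul_tmul', smul_tmul', ← add_tmul]
      congr 1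
      simp [Complex.real_smul, Complex.re_add_im]
    intro v
    simpa using LinearMap.ext_iff.mp this v
  -- injectivity of components
  have hinj : ∀ a b : H, (1:ℂ) ⊗ₜ[ℝ] a + Complex.I ⊗ₜ[ℝ] b = 0 → a = 0 ∧ b = 0 := by
    intro a b h
    constructor
    · have := congrArg r h
      simpa [map_add, hrt, Complex.one_re, Complex.I_re] using this
    · have := congrArg r' h
      simpa [map_add, hrt', Complex.one_im, Complex.I_im] using this
  -- key computation
  have keycalc : ∀ a b : H, T ((1:ℂ) ⊗ₜ[ℝ] a + Complex.I ⊗ₜ[ℝ] b)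
      = (1:ℂ) ⊗ₜ[ℝ] (B a - (2:ℝ) • b) + Complex.I ⊗ₜ[ℝ] (B b + (2:ℝ) • a) := by
    intro a b
    have h2I : (2 * Complex.I : ℂ) = (2:ℝ) • Complex.I := by
      simp [Complex.real_smul]
    have hm2 : (2 * Complex.I * Complex.I : ℂ) = (-2:ℝ) • 1 := by
      rw [mul_assoc, Complex.I_mul_I]
      norm_num [Complex.real_smul]
    rw [hT]
    simp only [LinearMap.add_apply, LinearMap.smul_apply, LinearMap.id_apply, map_add,
      LinearMap.baseChange_tmul, smul_add, smul_tmul', smul_eq_mul, mul_one]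
    rw [hm2, h2I, smul_tmul, smul_tmul,
      show ((-2:ℝ)) • b = -((2:ℝ) • b) by module, tmul_neg, tmul_sub, tmul_add]
    abel
  -- forward map lands in ker T
  have hforward : ∀ x, A x = 0 → T ((1:ℂ) ⊗ₜ[ℝ] x + Complex.I ⊗ₜ[ℝ] (I₀ x)) = 0 := by
    intro x hx
    rw [keycalc]
    have h1 : B x - (2:ℝ) • I₀ x = 0 := by rw [hBker x hx]; module
    have h2 : B (I₀ x) + (2:ℝ) • x = 0 := by
      rw [hBker _ (hI₀ker x hx)]
      have : I₀ (I₀ x) = -x := by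
        have := LinearMap.ext_iff.mp h₀sq x
        simpa [Module.End.mul_apply] using this
      rw [this]; module
    rw [h1, h2, tmul_zero, tmul_zero, add_zero]
  -- backward: elements of ker T
  have hbackward : ∀ v : ℂ ⊗[ℝ] H, T v = 0 → A (r v) = 0 ∧ r' v = I₀ (r v) := by
    intro v hv
    set a := r v with ha
    set b := r' v with hb'
    have hvre := hrec v
    have h0 : (1:ℂ) ⊗ₜ[ℝ] (B a - (2:ℝ) • b) + Complex.I ⊗ₜ[ℝ] (B b + (2:ℝ) • a) = 0 := by
      rw [← keycalc, hvre, hv]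
    obtain ⟨h1, h2⟩ := hinj _ _ h0
    have hBa : B a = (2:ℝ) • b := by linear_combination (norm := module) h1
    have hBb : B b = -((2:ℝ) • a) := by linear_combination (norm := module) h2
    have hAa : A a = 0 := by
      apply kerAA
      rw [hAAx, hBa, map_smul, hBb]
      module
    refine ⟨hAa, ?_⟩
    have := hBker a hAa
    rw [hBa] at this
    have h2ne : (2:ℝ) ≠ 0 := two_ne_zero
    exact smul_right_injective H h2ne this
  -- the linear equivalence
  set W : Submodule ℂ (ℂ ⊗[ℝ] H) := LinearMap.ker T with hW
  set φ : H →ₗ[ℝ] ℂ ⊗[ℝ] H :=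
    TensorProduct.mk ℝ ℂ H 1 + (TensorProduct.mk ℝ ℂ H Complex.I) ∘ₗ I₀ with hφ
  have hφapp : ∀ x : H, φ x = (1:ℂ) ⊗ₜ[ℝ] x + Complex.I ⊗ₜ[ℝ] (I₀ x) := by
    intro x; simp [hφ]
  have hmem1 : ∀ x : (LinearMap.ker A), φ ((LinearMap.ker A).subtype x) ∈ W.restrictScalars ℝ := by
    intro x
    have h : T (φ ((LinearMap.ker A).subtype x)) = 0 := by
      rw [hφapp]
      exact hforward _ (LinearMap.mem_ker.mp x.2)
    have h2 : φ ((LinearMap.ker A).subtype x) ∈ W := LinearMap.mem_ker.mpr h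
    exact (Submodule.restrictScalars_mem ℝ W _).mpr h2
  have hmem2 : ∀ v : (W.restrictScalars ℝ),
      r ((W.restrictScalars ℝ).subtype v) ∈ LinearMap.ker A := by
    intro v
    have hv : (v : ℂ ⊗[ℝ] H) ∈ W := v.2
    exact LinearMap.mem_ker.mpr (hbackward v (LinearMap.mem_ker.mp hv)).1
  set f : (LinearMap.ker A) →ₗ[ℝ] (W.restrictScalars ℝ) :=
    (φ ∘ₗ (LinearMap.ker A).subtype).codRestrict (W.restrictScalars ℝ)
      (fun x => hmem1 x) with hf
  set g : (W.restrictScalars ℝ) →ₗ[ℝ] (LinearMap.ker A) :=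
    (r ∘ₗ (W.restrictScalars ℝ).subtype).codRestrict (LinearMap.ker A)
      (fun v => hmem2 v) with hg
  have hfg : f.comp g = LinearMap.id := by
    apply LinearMap.ext
    intro v
    apply Subtype.ext
    have hv' : (v : ℂ ⊗[ℝ] H) ∈ W := v.2
    have hv : T (v : ℂ ⊗[ℝ] H) = 0 := LinearMap.mem_ker.mp hv'
    obtain ⟨hAa, hba⟩ := hbackward (v : ℂ ⊗[ℝ] H) hv
    simp only [hf, hg, LinearMap.comp_apply, LinearMap.codRestrict_apply, LinearMap.id_apply,
      Submodule.coe_subtype]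
    rw [hφapp, ← hba, hrec]
  have hgf : g.comp f = LinearMap.id := by
    apply LinearMap.ext
    intro x
    apply Subtype.ext
    simp only [hg, hf, LinearMap.comp_apply, LinearMap.codRestrict_apply, LinearMap.id_apply,
      Submodule.coe_subtype]
    rw [hφapp, map_add, hrt, hrt]
    simp only [Complex.one_re, Complex.I_re, one_smul, zero_smul, add_zero]
  have e : (LinearMap.ker A) ≃ₗ[ℝ] (W.restrictScalars ℝ) := LinearEquiv.ofLinear f g hfg hgf
  have e2 : (W.restrictScalars ℝ) ≃ₗ[ℝ] W :=
    (Submodule.restrictScalarsEquiv ℝ ℂ (ℂ ⊗[ℝ] H) W).restrictScalars ℝ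
  have hdim : finrank ℝ (LinearMap.ker A) = 2 * finrank ℂ W := by
    rw [e.finrank_eq, e2.finrank_eq, ← Complex.finrank_real_complex,
      Module.finrank_mul_finrank ℝ ℂ W]
  constructor
  · exact ⟨finrank ℂ W, by rw [hdim]; ring⟩
  · rw [hdim]; omega
end
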